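/- Let A be a finite commutative ring such that |D|·|D^⊥| = |A|ⁿ holds for every A-submodule D ⊆ Aⁿ (this holds whenever A is a finite commutative Frobenius ring). Let f ∈ R = A[X; θ, δ] be monic of degree n with f = h·g = g·ħ, deg(g) = n−k, and let M be the n × n matrix over A whose i-th row is the coefficient vector of X^{i−1}·ħ mod f. Let C ⊆ Aⁿ be the vector representation of 𝒞 = Rg/Rf, so that |C| = |A|^k. Then the Euclidean dual code C^⊥ equals the A-module generated by the columns of M, and |C^⊥| = |A|^{n−k}. -/

import Mathlib

/-- The skew polynomial ring `R = A[X; θ, δ]`: a ring `R` together with a coefficient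
embedding `C : A →+* R` and an indeterminate `X` satisfying the commutation rule
`X * C a = C (θ a) * X + C (δ a)`, such that every element of `R` is, in a unique way,
a left polynomial `Σᵢ C aᵢ * X ^ i`. -/
structure SkewPolyRing (A : Type*) [Ring A] (θ : A →+* A) (δ : A →+ A)
    (R : Type*) [Ring R] where
  /-- embedding of the coefficient ring -/
  C : A →+* R
  /-- the indeterminate -/
  X : R
  /-- the commutation rule `X·a = θ(a)·X + δ(a)` -/
  X_mul : ∀ a : A, X * C a = C (θ a) * X + C (δ a)
  /-- every element of `R` is uniquely a left polynomial in `X` -/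
  equiv : (ℕ →₀ A) ≃ R
  equiv_apply : ∀ p : ℕ →₀ A, equiv p = p.sum fun i a => C a * X ^ i

namespace SkewPolyRing

variable {A : Type*} [Ring A] {θ : A →+* A} {δ : A →+ A} {R : Type*} [Ring R]

/-- the `i`-th coefficient of a skew polynomial -/
noncomputable def coeff (S : SkewPolyRing A θ δ R) (f : R) (i : ℕ) : A :=
  S.equiv.symm f i

/-- the degree of a skew polynomial (the degree of `0` is `⊥ = -∞`) -/
noncomputable def deg (S : SkewPolyRing A θ δ R) (f : R) : WithBot ℕ :=
  (S.equiv.symm f).support.max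

/-- the degree of a skew polynomial, as a natural number -/
noncomputable def natDeg (S : SkewPolyRing A θ δ R) (f : R) : ℕ :=
  WithBot.unbotD 0 (S.deg f)

/-- the leading coefficient of a skew polynomial -/
noncomputable def lc (S : SkewPolyRing A θ δ R) (f : R) : A :=
  S.coeff f (S.natDeg f)

end SkewPolyRing

namespace SkewPolyRing

section RingA

variable {A : Type*} [Ring A] {θ : A →+* A} {δ : A →+ A} {R : Type*} [Ring R]
variable (S : SkewPolyRing A θ δ R)

theorem symm_single (a : A) (i : ℕ) : S.equiv.symm (S.C a * S.X ^ i) = Finsupp.single i a := by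
  rw [Equiv.symm_apply_eq, S.equiv_apply, Finsupp.sum_single_index (by simp)]

theorem symm_add (x y : R) : S.equiv.symm (x + y) = S.equiv.symm x + S.equiv.symm y := by
  apply S.equiv.injective
  rw [Equiv.apply_symm_apply, S.equiv_apply,
    Finsupp.sum_add_index (fun i _ => by simp) (fun i _ a b => by rw [map_add, add_mul]),
    ← S.equiv_apply, ← S.equiv_apply, Equiv.apply_symm_apply, Equiv.apply_symm_apply]

theorem symm_zero : S.equiv.symm (0 : R) = 0 := by
  rw [Equiv.symm_apply_eq, S.equiv_apply, Finsupp.sum_zero_index]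

noncomputable def symmHom : R →+ (ℕ →₀ A) where
  toFun := S.equiv.symm
  map_zero' := S.symm_zero
  map_add' := S.symm_add

@[simp] theorem symmHom_apply (x : R) : S.symmHom x = S.equiv.symm x := rfl

theorem coeff_add (x y : R) (i : ℕ) : S.coeff (x + y) i = S.coeff x i + S.coeff y i := by
  simp [coeff, symm_add]

theorem coeff_zero' (i : ℕ) : S.coeff (0 : R) i = 0 := by simp [coeff, symm_zero]

theorem coeff_single (a : A) (i j : ℕ) :
    S.coeff (S.C a * S.X ^ i) j = if i = j then a else 0 := by
  rw [coeff, symm_single, Finsupp.single_apply]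

theorem decomp (r : R) : r = (S.equiv.symm r).sum fun i a => S.C a * S.X ^ i := by
  conv_lhs => rw [← S.equiv.apply_symm_apply r, S.equiv_apply]

theorem coeff_sum {ι : Type*} (s : Finset ι) (F : ι → R) (j : ℕ) :
    S.coeff (∑ i ∈ s, F i) j = ∑ i ∈ s, S.coeff (F i) j := by
  have : S.equiv.symm (∑ i ∈ s, F i) = ∑ i ∈ s, S.equiv.symm (F i) :=
    map_sum S.symmHom F s
  rw [coeff, this, Finsupp.finset_sum_apply]
  rfl

theorem coeff_X_mul_aux (r : R) (j : ℕ) :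
    S.coeff (S.X * r) j = ∑ i ∈ (S.equiv.symm r).support,
      ((if i + 1 = j then θ (S.equiv.symm r i) else 0)
        + (if i = j then δ (S.equiv.symm r i) else 0)) := by
  have e : S.X * r = ∑ i ∈ (S.equiv.symm r).support,
      (S.C (θ (S.equiv.symm r i)) * S.X ^ (i + 1) + S.C (δ (S.equiv.symm r i)) * S.X ^ i) := by
    conv_lhs => rw [S.decomp r]
    rw [Finsupp.sum, Finset.mul_sum]
    refine Finset.sum_congr rfl fun i _ => ?_
    rw [← mul_assoc, S.X_mul, add_mul, mul_assoc, ← pow_succ']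
  rw [e, coeff_sum]
  refine Finset.sum_congr rfl fun i _ => ?_
  rw [coeff_add, coeff_single, coeff_single]

theorem coeff_X_mul_zero (r : R) : S.coeff (S.X * r) 0 = δ (S.coeff r 0) := by
  rw [coeff_X_mul_aux]
  simp only [Nat.succ_ne_zero, if_false, zero_add]
  rw [Finset.sum_ite_eq' (S.equiv.symm r).support 0 (fun i => δ (S.equiv.symm r i))]
  by_cases h : 0 ∈ (S.equiv.symm r).support
  · rw [if_pos h]; rfl
  · rw [if_neg h, coeff, Finsupp.notMem_support_iff.mp h, map_zero]

theorem coeff_X_mul_succ (r : R) (j : ℕ) :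
    S.coeff (S.X * r) (j + 1) = θ (S.coeff r j) + δ (S.coeff r (j + 1)) := by
  rw [coeff_X_mul_aux, Finset.sum_add_distrib]
  congr 1
  · have : ∀ i, (i + 1 = j + 1) = (i = j) := fun i => by simp
    simp_rw [this]
    rw [Finset.sum_ite_eq' (S.equiv.symm r).support j (fun i => θ (S.equiv.symm r i))]
    by_cases h : j ∈ (S.equiv.symm r).support
    · rw [if_pos h]; rfl
    · rw [if_neg h, coeff, Finsupp.notMem_support_iff.mp h, map_zero]
  · rw [Finset.sum_ite_eq' (S.equiv.symm r).support (j+1) (fun i => δ (S.equiv.symm r i))]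
    by_cases h : j + 1 ∈ (S.equiv.symm r).support
    · rw [if_pos h]; rfl
    · rw [if_neg h, coeff, Finsupp.notMem_support_iff.mp h, map_zero]

theorem coeff_pow_X_mul (r : R) (d : ℕ) (hr : ∀ i, d < i → S.coeff r i = 0) (m : ℕ) :
    (∀ i, d + m < i → S.coeff (S.X ^ m * r) i = 0)
      ∧ S.coeff (S.X ^ m * r) (d + m) = (θ ^ m) (S.coeff r d) := by
  induction m with
  | zero => simpa using hr
  | succ m ih =>
    have e : S.X ^ (m + 1) * r = S.X * (S.X ^ m * r) := by rw [pow_succ', mul_assoc]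
    constructor
    · intro i hi
      obtain ⟨i', rfl⟩ : ∃ i', i = i' + 1 := ⟨i - 1, by omega⟩
      rw [e, coeff_X_mul_succ, ih.1 i' (by omega), ih.1 _ (by omega), map_zero, map_zero,
        add_zero]
    · rw [e, show d + (m + 1) = (d + m) + 1 from rfl, coeff_X_mul_succ, ih.2,
        ih.1 _ (by omega), map_zero, add_zero, pow_succ']
      rfl

theorem coeff_C_mul (a : A) (r : R) (j : ℕ) : S.coeff (S.C a * r) j = a * S.coeff r j := by
  have e : S.C a * r = ∑ i ∈ (S.equiv.symm r).support,
      S.C (a * S.equiv.symm r i) * S.X ^ i := by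
    conv_lhs => rw [S.decomp r]
    rw [Finsupp.sum, Finset.mul_sum]
    refine Finset.sum_congr rfl fun i _ => ?_
    rw [← mul_assoc, ← map_mul]
  rw [e, coeff_sum]
  simp_rw [coeff_single]
  rw [Finset.sum_ite_eq' (S.equiv.symm r).support j (fun i => a * S.equiv.symm r i)]
  by_cases h : j ∈ (S.equiv.symm r).support
  · rw [if_pos h]; rfl
  · rw [if_neg h, coeff, Finsupp.notMem_support_iff.mp h, mul_zero]

theorem coeff_mul_top (p q : R) (dp dq : ℕ)
    (hp : ∀ i, dp < i → S.coeff p i = 0) (hq : ∀ i, dq < i → S.coeff q i = 0) :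
    (∀ j, dp + dq < j → S.coeff (p * q) j = 0)
      ∧ S.coeff (p * q) (dp + dq) = S.coeff p dp * (θ ^ dp) (S.coeff q dq) := by
  have e : p * q = ∑ i ∈ (S.equiv.symm p).support,
      S.C (S.equiv.symm p i) * (S.X ^ i * q) := by
    conv_lhs => rw [S.decomp p]
    rw [Finsupp.sum, Finset.sum_mul]
    refine Finset.sum_congr rfl fun i _ => ?_
    rw [mul_assoc]
  constructor
  · intro j hj
    rw [e, coeff_sum]
    refine Finset.sum_eq_zero fun i _ => ?_
    rw [coeff_C_mul]
    by_cases hid : dp < i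
    · rw [show S.equiv.symm p i = S.coeff p i from rfl, hp i hid, zero_mul]
    · rw [(S.coeff_pow_X_mul q dq hq i).1 j (by omega), mul_zero]
  · rw [e, coeff_sum]
    rw [Finset.sum_eq_single dp]
    · rw [coeff_C_mul, show dp + dq = dq + dp from Nat.add_comm dp dq,
        (S.coeff_pow_X_mul q dq hq dp).2]
      rfl
    · intro i _ hne
      rw [coeff_C_mul]
      rcases Nat.lt_or_ge dp i with hid | hid
      · rw [show S.equiv.symm p i = S.coeff p i from rfl, hp i hid, zero_mul]
      · rw [(S.coeff_pow_X_mul q dq hq i).1 (dp + dq) (by omega), mul_zero]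
    · intro hnm
      rw [coeff_C_mul, Finsupp.notMem_support_iff.mp hnm, zero_mul]

theorem coeff_eq_zero_of_deg_le (r : R) (m : ℕ) (h : S.deg r ≤ (m : WithBot ℕ)) :
    ∀ i, m < i → S.coeff r i = 0 := by
  intro i hi
  by_contra hne
  have hmem : i ∈ (S.equiv.symm r).support := Finsupp.mem_support_iff.mpr hne
  have h2 := le_trans (Finset.le_max hmem) h
  have : i ≤ m := by rw [Nat.cast_withBot] at h2; exact WithBot.coe_le_coe.mp h2
  omega

theorem natDeg_spec (r : R) (hr : r ≠ 0) :
    S.coeff r (S.natDeg r) ≠ 0 ∧ ∀ i, S.natDeg r < i → S.coeff r i = 0 := by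
  have hs : (S.equiv.symm r).support.Nonempty := by
    rw [Finsupp.support_nonempty_iff]
    intro h0
    apply hr
    have := congrArg S.equiv h0
    rwa [Equiv.apply_symm_apply, S.equiv_apply, Finsupp.sum_zero_index] at this
  obtain ⟨m, hm⟩ := Finset.max_of_nonempty hs
  have hmem : m ∈ (S.equiv.symm r).support := Finset.mem_of_max hm
  have hnd : S.natDeg r = m := by rw [natDeg, deg, hm]; rfl
  refine ⟨by rw [hnd]; exact Finsupp.mem_support_iff.mp hmem, ?_⟩
  exact S.coeff_eq_zero_of_deg_le r (S.natDeg r) (by rw [deg, hm, hnd, Nat.cast_withBot])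

end RingA

section CommRingA

variable {A : Type*} [CommRing A] {θ : A →+* A} {δ : A →+ A} {R : Type*} [Ring R]
variable (S : SkewPolyRing A θ δ R)

theorem coeff_finSum {n : ℕ} (a : Fin n → A) (i : Fin n) :
    S.coeff (∑ j : Fin n, S.C (a j) * S.X ^ (j : ℕ)) (i : ℕ) = a i := by
  rw [coeff_sum]
  simp only [coeff_single, Fin.val_inj]
  simp [Finset.sum_ite_eq' Finset.univ i a]

theorem coeff_finSum_ge {n : ℕ} (a : Fin n → A) (i : ℕ) (hi : n ≤ i) :
    S.coeff (∑ j : Fin n, S.C (a j) * S.X ^ (j : ℕ)) i = 0 := by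
  rw [coeff_sum]
  exact Finset.sum_eq_zero fun j _ => by rw [coeff_single, if_neg (by omega)]

theorem key_aux (n k : ℕ) (f g hbar : R)
    (hfb : ∀ i, n < i → S.coeff f i = 0) (hmf : S.coeff f n = 1)
    (h2 : f = g * hbar)
    (hhb : ∀ i, k < i → S.coeff hbar i = 0) (hlc : IsUnit (S.coeff hbar k))
    (M : Matrix (Fin n) (Fin n) A)
    (hM : ∀ i : Fin n, ∃ q : R,
      S.X ^ (i : ℕ) * hbar = q * f + ∑ j : Fin n, S.C (M i j) * S.X ^ (j : ℕ))
    (w : Fin n → A) :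
    (∃ u : R, (∑ i : Fin n, S.C (w i) * S.X ^ (i : ℕ)) = u * g)
      ↔ ∀ j : Fin n, ∑ i, w i * M i j = 0 := by
  choose q hq using hM
  set Q : R := ∑ i : Fin n, S.C (w i) * q i with hQ
  have expand : (∑ i : Fin n, S.C (w i) * S.X ^ (i : ℕ)) * hbar
      = Q * f + ∑ j : Fin n, S.C (∑ i, w i * M i j) * S.X ^ (j : ℕ) := by
    rw [Finset.sum_mul]
    calc ∑ i : Fin n, S.C (w i) * S.X ^ (i : ℕ) * hbar
        = ∑ i : Fin n, S.C (w i) * (S.X ^ (i : ℕ) * hbar) := by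
          refine Finset.sum_congr rfl fun i _ => by rw [mul_assoc]
      _ = ∑ i : Fin n, (S.C (w i) * q i * f
            + ∑ j : Fin n, S.C (w i) * (S.C (M i j) * S.X ^ (j : ℕ))) := by
          refine Finset.sum_congr rfl fun i _ => ?_
          rw [hq i, mul_add, Finset.mul_sum, mul_assoc]
      _ = Q * f + ∑ j : Fin n, S.C (∑ i, w i * M i j) * S.X ^ (j : ℕ) := by
          rw [Finset.sum_add_distrib, ← Finset.sum_mul, Finset.sum_comm]
          congr 1
          refine Finset.sum_congr rfl fun j _ => ?_
          rw [map_sum, Finset.sum_mul]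
          refine Finset.sum_congr rfl fun i _ => ?_
          rw [map_mul, mul_assoc]
  constructor
  · rintro ⟨u, hu⟩
    have h3 : (∑ j : Fin n, S.C (∑ i, w i * M i j) * S.X ^ (j : ℕ)) = (u - Q) * f := by
      rw [sub_mul]
      have : u * f = Q * f + ∑ j : Fin n, S.C (∑ i, w i * M i j) * S.X ^ (j : ℕ) := by
        rw [h2, ← mul_assoc, ← hu, expand, ← h2]
      rw [this, add_sub_cancel_left]
    have huQ : u - Q = 0 := by
      by_contra hne
      obtain ⟨hlc0, hbd⟩ := S.natDeg_spec (u - Q) hne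
      have htop := (S.coeff_mul_top (u - Q) f (S.natDeg (u - Q)) n hbd hfb).2
      rw [hmf, map_one, mul_one] at htop
      rw [← h3, S.coeff_finSum_ge _ _ (by omega)] at htop
      exact hlc0 htop.symm
    have hz : (∑ j : Fin n, S.C (∑ i, w i * M i j) * S.X ^ (j : ℕ)) = 0 := by
      rw [h3, huQ, zero_mul]
    intro j
    have := S.coeff_finSum (fun j => ∑ i, w i * M i j) j
    rw [hz, coeff_zero'] at this
    exact this.symm
  · intro hw
    have hz : (∑ j : Fin n, S.C (∑ i, w i * M i j) * S.X ^ (j : ℕ)) = 0 := by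
      refine Finset.sum_eq_zero fun j _ => ?_
      rw [hw j, map_zero, zero_mul]
    have h4 : ((∑ i : Fin n, S.C (w i) * S.X ^ (i : ℕ)) - Q * g) * hbar = 0 := by
      rw [sub_mul, expand, hz, add_zero, mul_assoc, ← h2, sub_self]
    have h5 : (∑ i : Fin n, S.C (w i) * S.X ^ (i : ℕ)) - Q * g = 0 := by
      by_contra hne
      obtain ⟨hlc0, hbd⟩ := S.natDeg_spec _ hne
      have htop := (S.coeff_mul_top _ hbar _ k hbd hhb).2
      rw [h4, coeff_zero'] at htop
      have hunit : IsUnit ((θ ^ S.natDeg ((∑ i : Fin n, S.C (w i) * S.X ^ (i : ℕ)) - Q * g))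
          (S.coeff hbar k)) := hlc.map _
      exact hlc0 ((hunit.mul_left_eq_zero).mp htop.symm)
    exact ⟨Q, by rw [← sub_eq_zero]; exact h5⟩

end CommRingA

end SkewPolyRing


/-- Let `A` be a finite commutative ring satisfying
`|D| * |D^⊥| = |A| ^ n` for every `A`-submodule `D ⊆ Aⁿ` (as holds for finite commutative
Frobenius rings). Let `f = h * g = g * ħ` be monic of degree `n` in `R = A[X; θ, δ]` with
`deg g = n - k`, let `M` be the `n × n` matrix whose `i`-th row is the coefficient vector
of `X^(i-1) * ħ mod f`, and let `C ⊆ Aⁿ` be the vector representation of `𝒞 = Rg/Rf`,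
so that `|C| = |A| ^ k`. Then the Euclidean dual `C^⊥` equals the `A`-module generated by
the columns of `M`, and `|C^⊥| = |A| ^ (n - k)`. -/
theorem dual_eq_columnSpan
    {A R : Type*} [CommRing A] [Nontrivial A] [Finite A] [Ring R]
    (θ : A →+* A) (δ : A →+ A)
    (hδ : ∀ a b : A, δ (a * b) = δ a * b + θ a * δ b)
    (S : SkewPolyRing A θ δ R)
    (n k : ℕ) (hkn : k ≤ n)
    (hFrob : ∀ D : Submodule A (Fin n → A),
      Nat.card D * Nat.card {v : Fin n → A | ∀ d ∈ D, ∑ i, v i * d i = 0}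
        = Nat.card A ^ n)
    (f g h hbar : R)
    (hdegf : S.deg f = (n : WithBot ℕ)) (hmf : S.coeff f n = 1)
    (h1 : f = h * g) (h2 : f = g * hbar)
    (hdegg : S.deg g = ((n - k : ℕ) : WithBot ℕ))
    (hdeghbar : S.deg hbar = (k : WithBot ℕ))
    (hlc : IsUnit (S.coeff hbar k))
    (M : Matrix (Fin n) (Fin n) A)
    (hM : ∀ i : Fin n, ∃ q : R,
      S.X ^ (i : ℕ) * hbar = q * f + ∑ j : Fin n, S.C (M i j) * S.X ^ (j : ℕ))
    (C : Set (Fin n → A))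
    (hC : C = {w | ∃ u : R, (∑ i : Fin n, S.C (w i) * S.X ^ (i : ℕ)) = u * g})
    (hcard : Nat.card C = Nat.card A ^ k) :
    {v : Fin n → A | ∀ c ∈ C, ∑ i, v i * c i = 0}
        = (Submodule.span A (Set.range fun j : Fin n => fun i : Fin n => M i j) :
            Set (Fin n → A)) ∧
    Nat.card {v : Fin n → A | ∀ c ∈ C, ∑ i, v i * c i = 0} = Nat.card A ^ (n - k) := by
  have hfb : ∀ i, n < i → S.coeff f i = 0 :=
    S.coeff_eq_zero_of_deg_le f n (le_of_eq hdegf)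
  have hhb : ∀ i, k < i → S.coeff hbar i = 0 :=
    S.coeff_eq_zero_of_deg_le hbar k (le_of_eq hdeghbar)
  have key : ∀ w : Fin n → A, w ∈ C ↔ ∀ j : Fin n, ∑ i, w i * M i j = 0 := by
    intro w
    rw [hC]
    exact S.key_aux n k f g hbar hfb hmf h2 hhb hlc M hM w
  set D : Submodule A (Fin n → A) :=
    Submodule.span A (Set.range fun j : Fin n => fun i : Fin n => M i j) with hD
  have colmem : ∀ j : Fin n, (fun i : Fin n => M i j) ∈ D :=
    fun j => Submodule.subset_span ⟨j, rfl⟩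
  -- C is the perp of D
  have hCset : C = {v : Fin n → A | ∀ d ∈ D, ∑ i, v i * d i = 0} := by
    ext w
    simp only [Set.mem_setOf_eq]
    constructor
    · intro hw d hd
      have hw' := (key w).mp hw
      let L : (Fin n → A) →ₗ[A] A :=
        { toFun := fun d => ∑ i, w i * d i
          map_add' := fun x y => by simp [mul_add, Finset.sum_add_distrib]
          map_smul' := fun a x => by simp [Finset.mul_sum, mul_left_comm] }
      have hle : D ≤ LinearMap.ker L := by
        rw [hD, Submodule.span_le]
        rintro _ ⟨j, rfl⟩
        exact hw' j
      exact hle hd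
    · intro hv
      exact (key w).mpr fun j => hv _ (colmem j)
  -- counting
  have hApos : 0 < Nat.card A := Nat.card_pos
  have hpow : Nat.card A ^ n = Nat.card A ^ (n - k) * Nat.card A ^ k := by
    rw [← pow_add, Nat.sub_add_cancel hkn]
  have hDfrob := hFrob D
  rw [← hCset] at hDfrob
  rw [hcard, hpow] at hDfrob
  have cardD : Nat.card D = Nat.card A ^ (n - k) :=
    Nat.eq_of_mul_eq_mul_right (pow_pos hApos k) hDfrob
  -- C as a submodule
  let E : Submodule A (Fin n → A) :=
    { carrier := C
      add_mem' := by
        intro x y hx hy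
        have hx' : x ∈ C := hx
        have hy' : y ∈ C := hy
        show x + y ∈ C
        rw [hCset] at hx' hy' ⊢
        replace hx := hx'; replace hy := hy'
        intro d hd
        simp only [Pi.add_apply, add_mul, Finset.sum_add_distrib, hx d hd, hy d hd, add_zero]
      zero_mem' := by
        show (0 : Fin n → A) ∈ C
        rw [hCset]
        intro d hd
        simp
      smul_mem' := by
        intro a x hx
        have hx' : x ∈ C := hx
        show a • x ∈ C
        rw [hCset] at hx' ⊢
        replace hx := hx'
        intro d hd
        simp only [Pi.smul_apply, smul_eq_mul, mul_assoc, ← Finset.mul_sum, hx d hd, mul_zero]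
    }
  have hEfrob := hFrob E
  have memE : ∀ d, d ∈ E ↔ d ∈ C := fun d => Iff.rfl
  have hTeq : {v : Fin n → A | ∀ d ∈ E, ∑ i, v i * d i = 0}
      = {v : Fin n → A | ∀ c ∈ C, ∑ i, v i * c i = 0} := rfl
  have cardE : Nat.card E = Nat.card A ^ k := hcard
  rw [hTeq, cardE, hpow, mul_comm (Nat.card A ^ (n - k))] at hEfrob
  have cardT : Nat.card {v : Fin n → A | ∀ c ∈ C, ∑ i, v i * c i = 0}
      = Nat.card A ^ (n - k) :=
    Nat.eq_of_mul_eq_mul_left (pow_pos hApos k) hEfrob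
  refine ⟨?_, cardT⟩
  -- D ⊆ T and equal cardinalities
  have hsub : (D : Set (Fin n → A)) ⊆ {v : Fin n → A | ∀ c ∈ C, ∑ i, v i * c i = 0} := by
    intro d hd c hc
    rw [hCset] at hc
    rw [Finset.sum_congr rfl fun i _ => mul_comm (d i) (c i)]
    exact hc d hd
  refine (Set.eq_of_subset_of_ncard_le hsub ?_ (Set.toFinite _)).symm
  rw [← Nat.card_coe_set_eq, ← Nat.card_coe_set_eq, cardT]
  rw [show Nat.card ↥(D : Set (Fin n → A)) = Nat.card D from rfl, cardD]
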